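/- Let X be a random vector in ℝⁿ, m ≥ 1 an integer, and x a point of the m-dimensional mould C_m(X). Then E[1/‖X−x‖^m] = +∞. -/

import Mathlib

open MeasureTheory Filter
open scoped ENNReal

/-- If `x` belongs to the `m`-dimensional mould of `X` (with `m ≥ 1`),
i.e. `liminf_{ε→0⁺} P(‖X - x‖ < ε)/ε^m > 0`, then `E[1/‖X - x‖^m] = +∞`. -/
theorem expectation_inv_pow_infinite_of_mem_mould {Ω : Type*} [MeasurableSpace Ω]
    (μ : Measure Ω) [IsProbabilityMeasure μ] {n : ℕ}
    (X : Ω → EuclideanSpace ℝ (Fin n)) (hX : Measurable X)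
    (m : ℕ) (hm : 1 ≤ m) (x : EuclideanSpace ℝ (Fin n))
    (hx : 0 < Filter.liminf
        (fun ε : ℝ => μ {ω | ‖X ω - x‖ < ε} / ENNReal.ofReal (ε ^ m))
        (nhdsWithin 0 (Set.Ioi 0))) :
    ∫⁻ ω, (ENNReal.ofReal (‖X ω - x‖ ^ m))⁻¹ ∂μ = ⊤ := by
  classical
  obtain ⟨c, hc0, hcL⟩ := exists_between hx
  have hev : ∀ᶠ ε in nhdsWithin 0 (Set.Ioi 0),
      c < μ {ω | ‖X ω - x‖ < ε} / ENNReal.ofReal (ε ^ m) :=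
    Filter.eventually_lt_of_lt_liminf hcL
  obtain ⟨ε₀, hε₀mem, hsub⟩ := mem_nhdsGT_iff_exists_Ioc_subset.mp hev
  have hε₀0 : (0:ℝ) < ε₀ := hε₀mem
  have hball : ∀ ε : ℝ, 0 < ε → ε ≤ ε₀ →
      c * ENNReal.ofReal (ε ^ m) ≤ μ {ω | ‖X ω - x‖ < ε} := by
    intro ε hε hεε
    have h : c < μ {ω | ‖X ω - x‖ < ε} / ENNReal.ofReal (ε ^ m) := hsub ⟨hε, hεε⟩
    have h0 : ENNReal.ofReal (ε ^ m) ≠ 0 := by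
      simp [ENNReal.ofReal_eq_zero, not_le, pow_pos hε]
    have hne : ENNReal.ofReal (ε ^ m) ≠ ⊤ := ENNReal.ofReal_ne_top
    calc c * ENNReal.ofReal (ε ^ m)
        ≤ μ {ω | ‖X ω - x‖ < ε} / ENNReal.ofReal (ε ^ m) * ENNReal.ofReal (ε ^ m) :=
          mul_le_mul_left h.le _
      _ = μ {ω | ‖X ω - x‖ < ε} := ENNReal.div_mul_cancel h0 hne
  set r : ℕ → ℝ := fun k => ε₀ / 2 ^ k with hr
  set b : ℕ → ℝ := fun k => ((2:ℝ) ^ k / ε₀) ^ m with hb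
  have hrpos : ∀ k, 0 < r k := fun k => div_pos hε₀0 (by positivity)
  have hrle : ∀ k, r k ≤ ε₀ := fun k =>
    div_le_self hε₀0.le (one_le_pow₀ one_le_two)
  have hranti : ∀ {k l : ℕ}, k ≤ l → r l ≤ r k := by
    intro k l hkl
    exact div_le_div_of_nonneg_left hε₀0.le (by positivity)
      (pow_le_pow_right₀ one_le_two hkl)
  have hbmono : ∀ {k l : ℕ}, k ≤ l → b k ≤ b l := by
    intro k l hkl
    refine pow_le_pow_left₀ (by positivity) ?_ m
    gcongr
    all_goals first
      | exact hε₀0.le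
      | exact pow_le_pow_right₀ one_le_two hkl
      | exact hkl
      | norm_num
  have hb0 : ∀ k, 0 ≤ b k := fun k => by positivity
  have hbr : ∀ k, b k = (r k ^ m)⁻¹ := by
    intro k
    rw [hb, hr]
    rw [← inv_pow, inv_div]
  set δ : ℝ := 1 - ((2:ℝ) ^ m)⁻¹ with hδdef
  have hδpos : 0 < δ := by
    have : ((2:ℝ) ^ m)⁻¹ < 1 := by
      rw [inv_lt_one_iff₀]
      right
      exact one_lt_pow₀ one_lt_two (by omega)
    simpa [hδdef] using this
  have hδk : ∀ k : ℕ, (b (k+1) - b k) * r (k+1) ^ m = δ := by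
    intro k
    have hε : ε₀ ≠ 0 := hε₀0.ne'
    have h2 : ((2:ℝ) ^ (k+1)) ≠ 0 := by positivity
    have h2k : ((2:ℝ) ^ k) ≠ 0 := by positivity
    have h2m : ((2:ℝ) ^ m) ≠ 0 := by positivity
    have hp : ((2:ℝ) ^ (k+1)) ^ m = ((2:ℝ) ^ k) ^ m * 2 ^ m := by
      rw [pow_succ, mul_pow]
    simp only [hb, hr, hδdef]
    rw [sub_mul, div_pow, div_pow, div_pow, div_mul_div_comm, div_mul_div_comm, hp]
    field_simp
  set κ : ℝ≥0∞ := c * ENNReal.ofReal δ with hκdef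
  have hms : ∀ s : ℝ, MeasurableSet {ω | ‖X ω - x‖ < s} := by
    intro s
    have : {ω | ‖X ω - x‖ < s} = X ⁻¹' Metric.ball x s := by
      ext ω; simp [Metric.mem_ball, dist_eq_norm]
    rw [this]
    exact hX measurableSet_ball
  have hpt : ∀ N : ℕ, ∀ ω : Ω,
      (∑ k ∈ Finset.range N,
        Set.indicator {ω | ‖X ω - x‖ < r (k+1)}
          (fun _ => ENNReal.ofReal (b (k+1) - b k)) ω)
      ≤ (ENNReal.ofReal (‖X ω - x‖ ^ m))⁻¹ := by
    intro N ω
    set g := ‖X ω - x‖ with hg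
    by_cases hex : ∃ k < N, g < r (k+1)
    · set P : ℕ → Prop := fun k => g < r k with hP
      set j := Nat.findGreatest P N with hj
      obtain ⟨k0, hk0N, hk0⟩ := hex
      have hjN : j ≤ N := Nat.findGreatest_le N
      have hPj : g < r j := Nat.findGreatest_spec (P := P) (by omega) hk0
      have hterm : ∀ k ∈ Finset.range N,
          Set.indicator {ω | ‖X ω - x‖ < r (k+1)}
            (fun _ => ENNReal.ofReal (b (k+1) - b k)) ω
          = if k < j then ENNReal.ofReal (b (k+1) - b k) else 0 := by
        intro k hk
        rw [Finset.mem_range] at hk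
        by_cases hkj : k < j
        · have : g < r (k+1) := lt_of_lt_of_le hPj (hranti (by omega))
          rw [Set.indicator_of_mem
            (show ω ∈ {ω | ‖X ω - x‖ < r (k+1)} from this), if_pos hkj]
        · have : ¬ g < r (k+1) := by
            intro hlt
            exact hkj (by
              have := Nat.le_findGreatest (P := P) (by omega : k+1 ≤ N) hlt
              omega)
          rw [Set.indicator_of_notMem
            (show ω ∉ {ω | ‖X ω - x‖ < r (k+1)} from this), if_neg hkj]
      rw [Finset.sum_congr rfl hterm]
      have hsplit : ∑ k ∈ Finset.range N,
          (if k < j then ENNReal.ofReal (b (k+1) - b k) else 0)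
          = ∑ k ∈ Finset.range j, ENNReal.ofReal (b (k+1) - b k) := by
        rw [← Finset.sum_range_add_sum_Ico _ hjN]
        have h1 : ∑ k ∈ Finset.range j,
            (if k < j then ENNReal.ofReal (b (k+1) - b k) else 0)
            = ∑ k ∈ Finset.range j, ENNReal.ofReal (b (k+1) - b k) :=
          Finset.sum_congr rfl fun k hk => if_pos (Finset.mem_range.mp hk)
        have h2 : ∑ k ∈ Finset.Ico j N,
            (if k < j then ENNReal.ofReal (b (k+1) - b k) else 0) = 0 := by
          refine Finset.sum_eq_zero fun k hk => ?_
          rw [Finset.mem_Ico] at hk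
          exact if_neg (by omega)
        rw [h1, h2, add_zero]
      rw [hsplit]
      have htel : ∑ k ∈ Finset.range j, ENNReal.ofReal (b (k+1) - b k)
          = ENNReal.ofReal (b j - b 0) := by
        rw [← ENNReal.ofReal_sum_of_nonneg (fun k _ => sub_nonneg.2 (hbmono k.le_succ))]
        rw [Finset.sum_range_sub]
      rw [htel]
      calc ENNReal.ofReal (b j - b 0)
          ≤ ENNReal.ofReal (b j) := ENNReal.ofReal_le_ofReal (by linarith [hb0 0])
        _ = (ENNReal.ofReal (r j ^ m))⁻¹ := by
            rw [hbr j, ← ENNReal.ofReal_inv_of_pos (pow_pos (hrpos j) m)]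
        _ ≤ (ENNReal.ofReal (g ^ m))⁻¹ := by
            apply ENNReal.inv_le_inv.mpr
            apply ENNReal.ofReal_le_ofReal
            exact pow_le_pow_left₀ (norm_nonneg _) hPj.le m
    · push_neg at hex
      refine le_trans (le_of_eq (Finset.sum_eq_zero fun k hk => ?_)) zero_le
      exact Set.indicator_of_notMem
        (show ω ∉ {ω | ‖X ω - x‖ < r (k+1)} from not_lt.2 (hex k (Finset.mem_range.mp hk))) _
  have key : ∀ N : ℕ, (N : ℝ≥0∞) * κ ≤ ∫⁻ ω, (ENNReal.ofReal (‖X ω - x‖ ^ m))⁻¹ ∂μ := by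
    intro N
    calc (N : ℝ≥0∞) * κ = ∑ _k ∈ Finset.range N, κ := by
          simp [Finset.sum_const, nsmul_eq_mul]
      _ ≤ ∑ k ∈ Finset.range N,
            ENNReal.ofReal (b (k+1) - b k) * μ {ω | ‖X ω - x‖ < r (k+1)} := by
          refine Finset.sum_le_sum fun k _ => ?_
          have h1 : κ = ENNReal.ofReal (b (k+1) - b k) * (c * ENNReal.ofReal (r (k+1) ^ m)) := by
            rw [hκdef, ← hδk k,
              ENNReal.ofReal_mul (sub_nonneg.2 (hbmono k.le_succ))]
            ring
          rw [h1]
          exact mul_le_mul_right (hball (r (k+1)) (hrpos _) (hrle _)) _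
      _ = ∑ k ∈ Finset.range N, ∫⁻ ω, Set.indicator {ω | ‖X ω - x‖ < r (k+1)}
            (fun _ => ENNReal.ofReal (b (k+1) - b k)) ω ∂μ := by
          refine Finset.sum_congr rfl fun k _ => ?_
          rw [lintegral_indicator_const (hms (r (k+1)))]
      _ = ∫⁻ ω, ∑ k ∈ Finset.range N, Set.indicator {ω | ‖X ω - x‖ < r (k+1)}
            (fun _ => ENNReal.ofReal (b (k+1) - b k)) ω ∂μ :=
          (lintegral_finset_sum _ (fun k _ =>
            (measurable_const.indicator (hms (r (k+1)))))).symm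
      _ ≤ ∫⁻ ω, (ENNReal.ofReal (‖X ω - x‖ ^ m))⁻¹ ∂μ := lintegral_mono (hpt N)
  have hκ0 : κ ≠ 0 := by
    simp [hκdef, hc0.ne', ENNReal.ofReal_eq_zero, not_le, hδpos]
  refine eq_top_iff.mpr ?_
  calc (⊤ : ℝ≥0∞) = (⨆ n : ℕ, (n : ℝ≥0∞)) * κ := by
        rw [ENNReal.iSup_natCast, ENNReal.top_mul hκ0]
    _ = ⨆ n : ℕ, (n : ℝ≥0∞) * κ := by rw [ENNReal.iSup_mul]
    _ ≤ _ := iSup_le key
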